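/- Let θᵘ be a real number with 0 < θᵘ ≤ π/2. Then for every real θ with |θ| ≤ θᵘ, cos θ ≤ 1 − ((1 − cos θᵘ)/(θᵘ)²)·θ². -/
import Mathlib


open Real

lemma aux_sin_concave {x y : ℝ} (hx : 0 ≤ x) (hxy : x ≤ y) (hy : y ≤ π) :
    x * Real.sin y ≤ y * Real.sin x := by
  rcases eq_or_lt_of_le (hx.trans hxy) with hy0 | hy0
  · have hx0 : x = 0 := le_antisymm (hxy.trans hy0.symm.le) hx
    simp [hx0, ← hy0]
  have key := strictConcaveOn_sin_Icc.concaveOn.2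
    (Set.mem_Icc.2 ⟨le_rfl, Real.pi_pos.le⟩) (Set.mem_Icc.2 ⟨hy0.le, hy⟩)
    (sub_nonneg.2 (div_le_one_of_le₀ hxy hy0.le))
    (div_nonneg hx hy0.le) (by ring : (1 - x / y) + x / y = 1)
  simp only [smul_eq_mul, mul_zero, Real.sin_zero, zero_add] at key
  have hxx : x / y * y = x := div_mul_cancel₀ x hy0.ne'
  rw [hxx] at key
  calc x * Real.sin y = (x / y * Real.sin y) * y := by field_simp
    _ ≤ Real.sin x * y := mul_le_mul_of_nonneg_right key hy0.le
    _ = y * Real.sin x := mul_comm _ _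

/-- Quadratic over-estimator of cosine: for 0 < θᵘ ≤ π/2 and |θ| ≤ θᵘ,
cos θ ≤ 1 − ((1 − cos θᵘ)/(θᵘ)²)·θ². -/
theorem cos_quadratic_overestimator (θu : ℝ) (hpos : 0 < θu) (hle : θu ≤ π / 2) :
    ∀ θ : ℝ, |θ| ≤ θu →
      cos θ ≤ 1 - ((1 - cos θu) / θu ^ 2) * θ ^ 2 := by
  intro θ hθ
  -- reduce to |θ|
  have hcos : cos θ = cos |θ| := by
    rcases abs_choice θ with h | h <;> simp [h]
  have hsq : θ ^ 2 = |θ| ^ 2 := (sq_abs θ).symm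
  rw [hcos, hsq]
  set t := |θ| with ht
  have ht0 : 0 ≤ t := abs_nonneg θ
  -- key inequality: (θu/2) * sin(t/2) ≥ (t/2) * sin(θu/2)
  have hkey : (t / 2) * sin (θu / 2) ≤ (θu / 2) * sin (t / 2) := by
    have := aux_sin_concave (x := t / 2) (y := θu / 2) (by linarith) (by linarith)
      (by nlinarith [Real.pi_pos])
    linarith
  have h1 : 1 - cos t = 2 * sin (t / 2) ^ 2 := by
    have h := Real.cos_two_mul (t / 2)
    rw [show 2 * (t / 2) = t by ring] at h
    nlinarith [Real.sin_sq_add_cos_sq (t / 2)]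
  have h2 : 1 - cos θu = 2 * sin (θu / 2) ^ 2 := by
    have h := Real.cos_two_mul (θu / 2)
    rw [show 2 * (θu / 2) = θu by ring] at h
    nlinarith [Real.sin_sq_add_cos_sq (θu / 2)]
  have hs1 : 0 ≤ sin (t / 2) := Real.sin_nonneg_of_nonneg_of_le_pi (by linarith)
    (by nlinarith [Real.pi_pos])
  have hs2 : 0 ≤ sin (θu / 2) := Real.sin_nonneg_of_nonneg_of_le_pi (by linarith)
    (by nlinarith [Real.pi_pos])
  have hsq2 : (t * sin (θu / 2)) ^ 2 ≤ (θu * sin (t / 2)) ^ 2 := by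
    have h4 : t * sin (θu / 2) ≤ θu * sin (t / 2) := by linarith
    exact pow_le_pow_left₀ (by positivity) h4 2
  have hθu2 : (0:ℝ) < θu ^ 2 := by positivity
  have hfin : (1 - cos θu) / θu ^ 2 * t ^ 2 ≤ 1 - cos t := by
    rw [div_mul_eq_mul_div, div_le_iff₀ hθu2]
    nlinarith [hsq2]
  linarith
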